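/- If f ∈ ℤ[x] has base-x representation f(x) = Σ b_i(x) x^i with digits b_i(x) ∈ {0,…,a-1} ∪ {x-1,…,x-a}, then for every integer b ≥ a, the base-b expansion of f(b) has digits b_i(b), i.e., f(b) = Σ b_i(b)·b^i with 0 ≤ b_i(b) ≤ b-1. -/

import Mathlib

def IsDigit (a : ℕ) (q : Polynomial ℤ) : Prop :=
  (∃ j : ℕ, j < a ∧ q = Polynomial.C (j : ℤ)) ∨
  (∃ j : ℕ, 1 ≤ j ∧ j ≤ a ∧ q = Polynomial.X - Polynomial.C (j : ℤ))

def IsBaseXRep (a : ℕ) (f : Polynomial ℤ) (m : ℕ) (d : ℕ → Polynomial ℤ) : Prop :=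
  (∀ i, IsDigit a (d i)) ∧ d m ≠ 0 ∧ (∀ i, m < i → d i = 0) ∧
  f = ∑ i ∈ Finset.range (m + 1), d i * Polynomial.X ^ i

/-- Substituting any integer b ≥ a into a base-x representation gives the
base-b expansion of f(b): the digits evaluate to integers in {0, …, b-1}. -/
theorem baseX_eval_gives_base_b_expansion (f : Polynomial ℤ) (hf : 0 < f.leadingCoeff)
    (a m : ℕ) (d : ℕ → Polynomial ℤ) (hrep : IsBaseXRep a f m d)
    (b : ℤ) (hb : (a : ℤ) ≤ b) :
    f.eval b = ∑ i ∈ Finset.range (m + 1), (d i).eval b * b ^ i ∧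
    ∀ i, 0 ≤ (d i).eval b ∧ (d i).eval b ≤ b - 1 := by
  obtain ⟨hdig, hdm, hzero, hsum⟩ := hrep
  constructor
  · rw [hsum]
    simp [Polynomial.eval_finset_sum]
  · intro i
    rcases hdig i with ⟨j, hj, hq⟩ | ⟨j, hj1, hja, hq⟩
    · rw [hq]
      simp only [Polynomial.eval_C]
      constructor
      · positivity
      · have : (j : ℤ) + 1 ≤ (a : ℤ) := by exact_mod_cast hj
        omega
    · rw [hq]
      simp only [Polynomial.eval_sub, Polynomial.eval_X, Polynomial.eval_C]
      have : (j : ℤ) ≤ (a : ℤ) := by exact_mod_cast hja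
      have h1 : (1 : ℤ) ≤ (j : ℤ) := by exact_mod_cast hj1
      omega
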